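/- arXiv:1609.02548 — 6 statements merged into one kernel-verified Lean document; each statement's English description precedes it below -/
import Mathlib

section
/- If G is a half-graph of height n, then the nested complexity length of G is at least n. -/
/-- `v` lies in the closed neighborhood `N[a]` of `a` in `G`. -/
def inNbhd {V : Type*} (G : SimpleGraph V) (a v : V) : Prop := a = v ∨ G.Adj a v

/-- `(b 0, …, b (n-1))` is a nested complexity sequence for `G`. -/
def IsNCS {V : Type*} (G : SimpleGraph V) (n : ℕ) (b : ℕ → V) : Prop :=
  ∀ k, k + 1 < n → ∃ a, (∀ i ≤ k, inNbhd G a (b i)) ∧ ¬ inNbhd G a (b (k + 1))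

/-- The nested complexity length of `G`: the supremum of lengths of
nested complexity sequences for `G`. -/
noncomputable def NCL {V : Type*} (G : SimpleGraph V) : ℕ∞ :=
  sSup {x : ℕ∞ | ∃ n : ℕ, x = n ∧ ∃ b : ℕ → V, IsNCS G n b}

/-- If `G` is a half-graph of height `n` (vertices partitioned into `a_1,…,a_n`
and `b_1,…,b_n` with `a i` adjacent to `b j` iff `j ≤ i`), then `NCL G ≥ n`. -/
theorem stmt_2 {V : Type*} (G : SimpleGraph V) (n : ℕ) (a b : Fin n → V)
    (hinj : Function.Injective (Sum.elim a b : Fin n ⊕ Fin n → V))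
    (hsurj : Function.Surjective (Sum.elim a b : Fin n ⊕ Fin n → V))
    (hadj : ∀ i j : Fin n, G.Adj (a i) (b j) ↔ j ≤ i) :
    (n : ℕ∞) ≤ NCL G := by
  rcases Nat.eq_zero_or_pos n with rfl | hn
  · simp
  apply le_sSup
  refine ⟨n, rfl, fun i => if h : i < n then b ⟨i, h⟩ else b ⟨0, hn⟩, ?_⟩
  intro k hk
  have hk1 : k + 1 < n := hk
  have hkn : k < n := Nat.lt_of_succ_lt hk1
  refine ⟨a ⟨k, hkn⟩, ?_, ?_⟩
  · intro i hi
    have hi' : i < n := lt_of_le_of_lt hi hkn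
    simp only [dif_pos hi']
    exact Or.inr ((hadj _ _).mpr hi)
  · simp only [dif_pos hk1]
    rintro (heq | hadj')
    · exact absurd (hinj (a₁ := Sum.inl ⟨k, hkn⟩) (a₂ := Sum.inr ⟨k + 1, hk1⟩) heq)
        (by simp)
    · have := (hadj _ _).mp hadj'
      simp [Fin.le_def] at this
end

section
/- The nested complexity length of the complete multipartite graph K_r(2) (r parts, each of size 2) equals 2r. -/
lemma fin2_other : ∀ x y : Fin 2, x ≠ y → x = y + 1 := by decide

lemma adj_iff {r : ℕ} (v w : Σ _ : Fin r, Fin 2) :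
    (SimpleGraph.completeMultipartiteGraph (fun _ : Fin r => Fin 2)).Adj v w ↔ v.1 ≠ w.1 :=
  Iff.rfl

/-- The nested complexity length of the complete multipartite graph `K_r(2)`
(`r` parts of size `2`) equals `2r`. -/
theorem stmt_3 (r : ℕ) (hr : 1 ≤ r) :
    NCL (SimpleGraph.completeMultipartiteGraph (fun _ : Fin r => Fin 2)) = (2 * r : ℕ) := by
  set G := SimpleGraph.completeMultipartiteGraph (fun _ : Fin r => Fin 2) with hG
  have hcard : Fintype.card (Σ _ : Fin r, Fin 2) = 2 * r := by
    simp [Fintype.card_sigma, mul_comm]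
  apply le_antisymm
  · apply sSup_le
    rintro x ⟨n, rfl, b, hb⟩
    have key : ∀ i j : ℕ, i < j → j < n → b i ≠ b j := by
      intro i j hij hjn
      obtain ⟨a, h1, h2⟩ := hb (j - 1) (by omega)
      have hji : j - 1 + 1 = j := by omega
      rw [hji] at h2
      intro heq
      exact h2 (heq ▸ h1 i (by omega))
    have hinj : Function.Injective (fun i : Fin n => b i) := by
      intro i j hij
      by_contra hne
      rcases lt_or_gt_of_ne (fun h : (i : ℕ) = (j : ℕ) => hne (Fin.ext h)) with h | h
      · exact key i j h j.isLt hij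
      · exact key j i h i.isLt hij.symm
    have := Fintype.card_le_of_injective _ hinj
    rw [Fintype.card_fin, hcard] at this
    exact_mod_cast this
  · apply le_sSup
    refine ⟨2 * r, rfl, ?_⟩
    have hpos : 0 < 2 * r := by omega
    set e := (Fintype.equivFinOfCardEq hcard).symm with he
    refine ⟨fun n => if h : n < 2 * r then e ⟨n, h⟩ else e ⟨0, hpos⟩, ?_⟩
    intro k hk
    set c := e ⟨k + 1, hk⟩ with hc
    refine ⟨⟨c.1, c.2 + 1⟩, ?_, ?_⟩
    · intro i hi
      have hi' : i < 2 * r := by omega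
      simp only [dif_pos hi', dif_pos hk]
      have hne : e ⟨i, hi'⟩ ≠ c := by
        rw [hc]
        intro h
        have := e.injective h
        simp only [Fin.mk.injEq] at this
        omega
      by_cases hfst : (e ⟨i, hi'⟩).1 = c.1
      · left
        have h2 : (e ⟨i, hi'⟩).2 ≠ c.2 := by
          intro h
          exact hne (Sigma.ext hfst (heq_of_eq h))
        have := fin2_other _ _ h2
        exact (Sigma.ext hfst.symm (heq_of_eq this.symm))
      · right
        rw [hG]
        exact fun h => hfst h.symm
    · simp only [dif_pos hk, ← hc]
      rintro (h | h)
      · have : c.2 + 1 = c.2 := by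
          have := congrArg Sigma.snd h
          simp at this
        exact absurd this (by omega)
      · exact h rfl
end

section
/- Let G be a graph and fix m, n > 0. If G does not contain a subgraph (not necessarily induced) isomorphic to the complete bipartite graph K_{m,n}, then the nested complexity length of G is at most 2^{m+n+1} - 2. -/
lemma key {V : Type*} (G : SimpleGraph V) (m n N : ℕ) (hm : 0 < m) (hn : 0 < n)
    (b : ℕ → V) (hb : IsNCS G N b) (hN : m + 2 * n + 1 ≤ N) :
    ∃ (x : Fin m → V) (y : Fin n → V),
        Function.Injective x ∧ Function.Injective y ∧
        (∀ i j, x i ≠ y j) ∧ (∀ i j, G.Adj (x i) (y j)) := by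
  classical
  -- b is injective below N
  have hbi : ∀ i j : ℕ, i < j → j < N → b i ≠ b j := by
    intro i j hij hjN heq
    obtain ⟨a, h1, h2⟩ := hb (j - 1) (by omega)
    have hj : j - 1 + 1 = j := by omega
    rw [hj] at h2
    exact h2 (heq ▸ h1 i (by omega))
  -- witnesses
  have hA : ∀ j : Fin n, ∃ a, (∀ i ≤ m + n + (j : ℕ), inNbhd G a (b i)) ∧
      ¬ inNbhd G a (b (m + n + (j : ℕ) + 1)) := by
    intro j
    exact hb (m + n + (j : ℕ)) (by have := j.isLt; omega)
  choose A hA1 hA2 using hA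
  have hAinj' : ∀ j j' : Fin n, (j : ℕ) < (j' : ℕ) → A j ≠ A j' := by
    intro j j' hlt heq
    apply hA2 j
    rw [heq]
    exact hA1 j' (m + n + (j : ℕ) + 1) (by omega)
  have hAinj : Function.Injective A := by
    intro j j' heq
    by_contra hne
    rcases lt_or_gt_of_ne (fun hc : (j : ℕ) = (j' : ℕ) => hne (Fin.ext hc)) with hlt | hlt
    · exact hAinj' j j' hlt heq
    · exact hAinj' j' j hlt heq.symm
  -- the good b-indices
  set S : Finset ℕ := (Finset.range (m + n)).filter (fun i => ∀ j : Fin n, b i ≠ A j) with hS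
  set T : Finset ℕ := (Finset.range (m + n)).filter (fun i => ¬ ∀ j : Fin n, b i ≠ A j) with hT
  have hST : S.card + T.card = m + n := by
    rw [hS, hT, Finset.card_filter_add_card_filter_not, Finset.card_range]
  have hTcard : T.card ≤ n := by
    have hTle : T.card ≤ (Finset.univ : Finset (Fin n)).card := by
      apply Finset.card_le_card_of_injOn
        (fun i => if h : ∃ j : Fin n, b i = A j then h.choose else ⟨0, hn⟩)
      · intro i _; exact Finset.mem_univ _
      · intro i hi i' hi' hfe
        rw [Finset.mem_coe, Finset.mem_filter] at hi hi'
        have ei : ∃ j : Fin n, b i = A j := by push_neg at hi; exact hi.2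
        have ei' : ∃ j : Fin n, b i' = A j := by push_neg at hi'; exact hi'.2
        simp only [dif_pos ei, dif_pos ei'] at hfe
        have hbb : b i = b i' := by rw [ei.choose_spec, ei'.choose_spec, hfe]
        have hiN : i < N := by have := Finset.mem_range.mp hi.1; omega
        have hi'N : i' < N := by have := Finset.mem_range.mp hi'.1; omega
        by_contra hne
        rcases lt_or_gt_of_ne hne with hlt | hlt
        · exact hbi i i' hlt hi'N hbb
        · exact hbi i' i hlt hiN hbb.symm
    simpa using hTle
  have hScard : m ≤ S.card := by omega
  obtain ⟨S', hS'sub, hS'card⟩ := Finset.exists_subset_card_eq hScard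
  have e := S'.orderIsoOfFin hS'card
  have hmem : ∀ i : Fin m, ((e i : ℕ) ∈ S) := fun i => hS'sub (e i).2
  have hlt : ∀ i : Fin m, (e i : ℕ) < m + n := by
    intro i
    have := (Finset.mem_filter.mp (hmem i)).1
    exact Finset.mem_range.mp this
  have hne : ∀ (i : Fin m) (j : Fin n), b (e i : ℕ) ≠ A j := by
    intro i j
    exact (Finset.mem_filter.mp (hmem i)).2 j
  refine ⟨fun i => b (e i : ℕ), A, ?_, hAinj, hne, ?_⟩
  · intro i i' heq
    have hii' : (e i : ℕ) = (e i' : ℕ) := by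
      by_contra hcc
      rcases lt_or_gt_of_ne hcc with hlt' | hlt'
      · exact hbi _ _ hlt' (by have := hlt i'; omega) heq
      · exact hbi _ _ hlt' (by have := hlt i; omega) heq.symm
    exact e.injective (Subtype.ext hii')
  · intro i j
    have hnb : inNbhd G (A j) (b (e i : ℕ)) := hA1 j _ (by have := hlt i; omega)
    rcases hnb with heq | hadj
    · exact absurd heq.symm (hne i j)
    · exact hadj.symm

/-- If `G` contains no (not necessarily induced) copy of the complete bipartite
graph `K_{m,n}`, then `NCL G ≤ 2^{m+n+1} - 2`. -/
theorem stmt_5 {V : Type*} (G : SimpleGraph V) (m n : ℕ) (hm : 0 < m) (hn : 0 < n)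
    (h : ¬ ∃ (x : Fin m → V) (y : Fin n → V),
        Function.Injective x ∧ Function.Injective y ∧
        (∀ i j, x i ≠ y j) ∧ (∀ i j, G.Adj (x i) (y j))) :
    NCL G ≤ ((2 ^ (m + n + 1) - 2 : ℕ) : ℕ∞) := by
  refine sSup_le ?_
  rintro x ⟨N, rfl, b, hb⟩
  rw [Nat.cast_le]
  by_contra hN
  push_neg at hN
  have h2 : m + n < 2 ^ (m + n) := Nat.lt_two_pow_self
  have h3 : 2 ^ (m + n + 1) = 2 * 2 ^ (m + n) := by ring
  exact h (key G m n N hm hn b hb (by omega))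
end

section
/- Let G be an infinite graph with upper density δ(G) < 1. Then NCL(G) ≥ 2/(1 - δ(G)). -/
open scoped Classical in
/-- Edge density of the finite induced subgraph of `G` on the finset `s`:
(ordered pairs of adjacent vertices in `s`) / (n(n-1)) = |E| / C(n,2). -/
noncomputable def finDensity {V : Type*} (G : SimpleGraph V) (s : Finset V) : ℝ :=
  ((s ×ˢ s).filter (fun p : V × V => G.Adj p.1 p.2)).card / (s.card * (s.card - 1) : ℝ)

open scoped Classical in
/-- The upper density of `G`: the supremum of `α` such that `G` has arbitrarily
large finite subgraphs of density at least `α`. -/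
noncomputable def upperDensity {V : Type*} (G : SimpleGraph V) : ℝ :=
  sSup {α : ℝ | ∀ N : ℕ, ∃ s : Finset V, N ≤ s.card ∧ α ≤ finDensity G s}


open Finset

section Basics
variable {V : Type*}

open scoped Classical in
/-- neighbors of `v` inside `s`. -/
noncomputable def nbhdIn (G : SimpleGraph V) (s : Finset V) (v : V) : Finset V :=
  s.filter (fun u => G.Adj v u)

open scoped Classical in
noncomputable def epairs (G : SimpleGraph V) (s : Finset V) : ℕ :=
  ((s ×ˢ s).filter (fun p : V × V => G.Adj p.1 p.2)).card

variable (G : SimpleGraph V) (s : Finset V) (v : V)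

lemma nbhdIn_subset : nbhdIn G s v ⊆ s := by
  classical
  intro u hu
  exact (Finset.mem_filter.mp hu).1

lemma notMem_nbhdIn : v ∉ nbhdIn G s v := by
  simp [nbhdIn]

lemma card_nbhdIn_le (hv : v ∈ s) : ((nbhdIn G s v).card : ℝ) ≤ (s.card : ℝ) - 1 := by
  classical
  have h : nbhdIn G s v ⊆ s.erase v := by
    intro u hu
    rcases Finset.mem_filter.mp hu with ⟨hus, hadj⟩
    exact Finset.mem_erase.mpr ⟨fun he => (G.irrefl (he ▸ hadj)), hus⟩
  have := Finset.card_le_card h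
  have h2 : (s.erase v).card = s.card - 1 := Finset.card_erase_of_mem hv
  have h3 : 1 ≤ s.card := Finset.card_pos.mpr ⟨v, hv⟩
  have : (nbhdIn G s v).card ≤ s.card - 1 := h2 ▸ this
  have := (Nat.cast_le (α := ℝ)).mpr this
  rwa [Nat.cast_sub h3, Nat.cast_one] at this

lemma epairs_eq_sum : epairs G s = ∑ v ∈ s, (nbhdIn G s v).card := by
  classical
  unfold epairs
  rw [Finset.card_eq_sum_card_fiberwise (f := Prod.fst) (t := s)
    (fun p hp => (Finset.mem_product.mp (Finset.mem_filter.mp hp).1).1)]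
  refine Finset.sum_congr rfl fun v hv => ?_
  apply Finset.card_bij (fun p _ => p.2)
  · rintro ⟨a, b⟩ hp
    simp only [Finset.mem_filter, Finset.mem_product] at hp
    obtain ⟨⟨⟨hb1, hb2⟩, hadj⟩, hfst⟩ := hp
    subst hfst
    exact Finset.mem_filter.mpr ⟨hb2, hadj⟩
  · rintro ⟨a, b⟩ hp ⟨a', b'⟩ hp' h
    simp only [Finset.mem_filter] at hp hp'
    obtain ⟨-, rfl⟩ := hp
    obtain ⟨-, rfl⟩ := hp'
    simp_all [Prod.ext_iff]
  · intro b hb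
    rcases Finset.mem_filter.mp hb with ⟨hbs, hadj⟩
    exact ⟨(v, b), Finset.mem_filter.mpr ⟨Finset.mem_filter.mpr
      ⟨Finset.mem_product.mpr ⟨hv, hbs⟩, hadj⟩, rfl⟩, rfl⟩

lemma epairs_le : (epairs G s : ℝ) ≤ (s.card : ℝ) * ((s.card : ℝ) - 1) := by
  rw [epairs_eq_sum]
  push_cast
  calc (∑ v ∈ s, ((nbhdIn G s v).card : ℝ)) ≤ ∑ v ∈ s, ((s.card : ℝ) - 1) :=
        Finset.sum_le_sum (fun v hv => card_nbhdIn_le G s v hv)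
    _ = (s.card : ℝ) * ((s.card : ℝ) - 1) := by
        rw [Finset.sum_const, nsmul_eq_mul]

open scoped Classical in
lemma epairs_erase_ge (hv : v ∈ s) :
    epairs G s ≤ epairs G (s.erase v) + 2 * (nbhdIn G s v).card := by
  classical
  unfold epairs
  have hsub : ((s ×ˢ s).filter (fun p : V × V => G.Adj p.1 p.2)) ⊆
      (((s.erase v) ×ˢ (s.erase v)).filter (fun p : V × V => G.Adj p.1 p.2))
        ∪ (({v} : Finset V) ×ˢ nbhdIn G s v) ∪ (nbhdIn G s v ×ˢ ({v} : Finset V)) := by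
    rintro ⟨a, b⟩ hp
    simp only [Finset.mem_filter, Finset.mem_product] at hp
    obtain ⟨⟨ha, hb⟩, hadj⟩ := hp
    by_cases hav : a = v
    · subst hav
      refine Finset.mem_union.mpr (Or.inl (Finset.mem_union.mpr (Or.inr ?_)))
      exact Finset.mem_product.mpr ⟨Finset.mem_singleton_self _,
        Finset.mem_filter.mpr ⟨hb, hadj⟩⟩
    by_cases hbv : b = v
    · subst hbv
      refine Finset.mem_union.mpr (Or.inr ?_)
      exact Finset.mem_product.mpr ⟨Finset.mem_filter.mpr ⟨ha, hadj.symm⟩,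
        Finset.mem_singleton_self _⟩
    · refine Finset.mem_union.mpr (Or.inl (Finset.mem_union.mpr (Or.inl ?_)))
      exact Finset.mem_filter.mpr ⟨Finset.mem_product.mpr
        ⟨Finset.mem_erase.mpr ⟨hav, ha⟩, Finset.mem_erase.mpr ⟨hbv, hb⟩⟩, hadj⟩
  calc ((s ×ˢ s).filter (fun p : V × V => G.Adj p.1 p.2)).card
      ≤ _ := Finset.card_le_card hsub
    _ ≤ (((s.erase v) ×ˢ (s.erase v)).filter (fun p : V × V => G.Adj p.1 p.2)).card
        + (({v} : Finset V) ×ˢ nbhdIn G s v).card + (nbhdIn G s v ×ˢ ({v} : Finset V)).card := by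
        refine le_trans (Finset.card_union_le _ _) ?_
        exact Nat.add_le_add_right (Finset.card_union_le _ _) _
    _ ≤ _ := by
        simp [Finset.card_product]
        omega

end Basics
section Deletion
variable {V : Type*} (G : SimpleGraph V)

/-- `s` contains a complete multipartite subgraph with `r` parts of size `t`. -/
def MP (G : SimpleGraph V) (s : Finset V) (r t : ℕ) : Prop :=
  ∃ P : Fin r → Finset V, (∀ i, P i ⊆ s ∧ (P i).card = t) ∧
    ∀ i j, i ≠ j → ∀ u ∈ P i, ∀ w ∈ P j, G.Adj u w

lemma exists_minDeg (c B : ℝ) :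
    ∀ s : Finset V, c * ((s.card : ℝ) * ((s.card : ℝ) - 1)) + B ≤ (epairs G s : ℝ) →
    ∃ s', s' ⊆ s ∧ (∀ v ∈ s', c * ((s'.card : ℝ) - 1) ≤ ((nbhdIn G s' v).card : ℝ)) ∧
      B ≤ (1 - c) * ((s'.card : ℝ) * ((s'.card : ℝ) - 1)) := by
  classical
  intro s
  induction s using Finset.strongInduction with
  | _ s ih =>
    intro hs
    by_cases hd : ∀ v ∈ s, c * ((s.card : ℝ) - 1) ≤ ((nbhdIn G s v).card : ℝ)
    · refine ⟨s, Finset.Subset.rfl, hd, ?_⟩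
      have h1 := epairs_le G s
      nlinarith [h1, hs]
    · push_neg at hd
      obtain ⟨v, hv, hdeg⟩ := hd
      have hcard : 1 ≤ s.card := Finset.card_pos.mpr ⟨v, hv⟩
      have hce : ((s.erase v).card : ℝ) = (s.card : ℝ) - 1 := by
        rw [Finset.card_erase_of_mem hv, Nat.cast_sub hcard, Nat.cast_one]
      have herase := epairs_erase_ge G s v hv
      have herase' : (epairs G s : ℝ) ≤ (epairs G (s.erase v) : ℝ)
          + 2 * ((nbhdIn G s v).card : ℝ) := by exact_mod_cast herase
      have hstep : c * (((s.erase v).card : ℝ) * (((s.erase v).card : ℝ) - 1)) + B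
          ≤ (epairs G (s.erase v) : ℝ) := by
        rw [hce]
        nlinarith [hs, herase', hdeg]
      obtain ⟨s', hsub, hmin, hB⟩ := ih (s.erase v) (Finset.erase_ssubset hv) hstep
      exact ⟨s', hsub.trans (Finset.erase_subset _ _), hmin, hB⟩

end Deletion
section ES
variable {V : Type*} (G : SimpleGraph V)

lemma exists_MP_of_minDeg :
    ∀ (q : ℕ) (t : ℕ) (ε : ℝ), 0 < ε →
    ∃ N : ℕ, ∀ s : Finset V, N ≤ s.card →
      (∀ v ∈ s, (1 - 1/((max q 1 : ℕ) : ℝ) + ε) * (s.card : ℝ) ≤ ((nbhdIn G s v).card : ℝ)) →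
      MP G s (q+1) t := by
  classical
  intro q
  induction q with
  | zero =>
    intro t ε hε
    refine ⟨t, fun s hs _ => ?_⟩
    obtain ⟨u, hus, huc⟩ := Finset.exists_subset_card_eq (s := s) (n := t) hs
    exact ⟨fun _ => u, fun i => ⟨hus, huc⟩, fun i j hij => absurd (Fin.ext (by omega)) hij⟩
  | succ q ih =>
    intro t ε hε
    set σ : ℝ := min (((q:ℝ)+1) * ε / 2) (1/2) with hσdef
    have hσpos : 0 < σ := lt_min (by positivity) (by norm_num)
    have hσhalf : σ ≤ 1/2 := min_le_right _ _
    have hσε : 2*σ ≤ ((q:ℝ)+1)*ε := by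
      have h := min_le_left (((q:ℝ)+1) * ε / 2) (1/2)
      rw [← hσdef] at h
      linarith
    set T : ℕ := max (t+1) ⌈(t:ℝ)/σ⌉₊ with hTdef
    have hTt : t < T := lt_of_lt_of_le (Nat.lt_succ_self t) (le_max_left _ _)
    have hTσ : (t:ℝ) ≤ (T:ℝ) * σ := by
      have h1 : ((⌈(t:ℝ)/σ⌉₊ : ℕ):ℝ) ≤ (T:ℝ) := Nat.cast_le.mpr (le_max_right _ _)
      have h2 : (t:ℝ)/σ ≤ ((⌈(t:ℝ)/σ⌉₊ : ℕ):ℝ) := Nat.le_ceil _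
      have h3 : (t:ℝ)/σ ≤ (T:ℝ) := le_trans h2 h1
      calc (t:ℝ) = ((t:ℝ)/σ) * σ := by field_simp
        _ ≤ (T:ℝ) * σ := mul_le_mul_of_nonneg_right h3 hσpos.le
    have hmaxpos : (0:ℝ) < ((max q 1 : ℕ):ℝ) := by
      have : (1:ℕ) ≤ max q 1 := le_max_right _ _
      exact_mod_cast Nat.lt_of_lt_of_le Nat.zero_lt_one this
    have hinv : 1/(((q:ℝ))+1) ≤ 1/((max q 1 : ℕ):ℝ) := by
      have h1 : ((max q 1 : ℕ):ℝ) ≤ (q:ℝ)+1 := by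
        have : max q 1 ≤ q + 1 := by omega
        exact_mod_cast this
      exact one_div_le_one_div_of_le hmaxpos h1
    set ε' : ℝ := 1/((max q 1 : ℕ):ℝ) - 1/((q:ℝ)+1) + ε with hε'def
    have hε'pos : 0 < ε' := by rw [hε'def]; linarith
    obtain ⟨N₁, hN₁⟩ := ih T ε' hε'pos
    set K : ℕ := (t-1) * 2^((q+1)*T) + 1 with hKdef
    refine ⟨max N₁ ⌈(K:ℝ)/σ⌉₊, fun s hsN hdeg => ?_⟩
    set n := s.card with hn
    have hmax2 : ((max (q+1) 1 : ℕ):ℝ) = (q:ℝ)+1 := by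
      have h : max (q+1) 1 = q+1 := by omega
      rw [h]; push_cast; ring
    have hdeg1 : ∀ v ∈ s, (1 - 1/((q:ℝ)+1) + ε) * (n:ℝ) ≤ ((nbhdIn G s v).card : ℝ) := by
      intro v hv
      have h := hdeg v hv
      rwa [hmax2] at h
    have hdeg2 : ∀ v ∈ s, (1 - 1/((max q 1 : ℕ):ℝ) + ε') * (n:ℝ) ≤ ((nbhdIn G s v).card : ℝ) := by
      intro v hv
      have h := hdeg1 v hv
      have he : (1 - 1/((max q 1:ℕ):ℝ) + ε') = (1 - 1/((q:ℝ)+1) + ε) := by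
        rw [hε'def]; ring
      rwa [he]
    obtain ⟨P, hP1, hP2⟩ := hN₁ s (le_trans (le_max_left _ _) hsN) hdeg2
    have hPdisj : ∀ (i j : Fin (q+1)), i ≠ j → Disjoint (P i) (P j) := by
      intro i j hij
      rw [Finset.disjoint_left]
      intro x hxi hxj
      exact G.irrefl (hP2 i j hij x hxi x hxj)
    set U : Finset V := Finset.univ.biUnion P with hU
    have hUs : U ⊆ s := by
      intro x hx
      rcases Finset.mem_biUnion.mp hx with ⟨i, _, hxi⟩
      exact (hP1 i).1 hxi
    have hUcard : U.card = (q+1) * T := by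
      rw [hU, Finset.card_biUnion (fun i _ j _ hij => hPdisj i j hij)]
      calc ∑ i, (P i).card = ∑ _i : Fin (q+1), T :=
            Finset.sum_congr rfl (fun i _ => (hP1 i).2)
        _ = (q+1) * T := by simp [Finset.sum_const, Finset.card_univ, mul_comm]
    -- good and bad vertices
    set nbP : Fin (q+1) → V → Finset V := fun i v => (P i).filter (fun u => G.Adj v u) with hnbP
    set good : Finset V := s.filter (fun v => ∀ i, t ≤ (nbP i v).card) with hgood
    set bad : Finset V := s.filter (fun v => ¬ ∀ i, t ≤ (nbP i v).card) with hbad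
    have hswap : ∑ v ∈ s, (U.filter (fun u => ¬ G.Adj u v)).card
        = ∑ u ∈ U, (s.filter (fun v => ¬ G.Adj u v)).card := by
      simp only [Finset.card_filter]
      exact Finset.sum_comm
    have hperu : ∀ u ∈ U, ((s.filter (fun v => ¬ G.Adj u v)).card : ℝ)
        ≤ (1/((q:ℝ)+1) - ε) * (n:ℝ) := by
      intro u hu
      have hus : u ∈ s := hUs hu
      have hdegu := hdeg1 u hus
      have hnb : (nbhdIn G s u).card = (s.filter (fun v => G.Adj u v)).card := by
        congr 1
      have hcompl : (s.filter (fun v => G.Adj u v)).card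
          + (s.filter (fun v => ¬ G.Adj u v)).card = n :=
        Finset.card_filter_add_card_filter_not _
      have hnb' : ((nbhdIn G s u).card : ℝ) = ((s.filter (fun v => G.Adj u v)).card : ℝ) := by
        exact_mod_cast hnb
      have hc : ((s.filter (fun v => G.Adj u v)).card : ℝ)
          + ((s.filter (fun v => ¬ G.Adj u v)).card : ℝ) = (n:ℝ) := by exact_mod_cast hcompl
      linarith
    have hbadcount : ∀ v ∈ bad, (T - t : ℕ) ≤ (U.filter (fun u => ¬ G.Adj u v)).card := by
      intro v hv
      rcases Finset.mem_filter.mp hv with ⟨hvs, hvb⟩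
      push_neg at hvb
      obtain ⟨i, hi⟩ := hvb
      have hsplit : (nbP i v).card + ((P i).filter (fun u => ¬ G.Adj v u)).card = T := by
        rw [hnbP]
        rw [Finset.card_filter_add_card_filter_not (fun u => G.Adj v u)]
        exact (hP1 i).2
      have hsub2 : (P i).filter (fun u => ¬ G.Adj v u) ⊆ U.filter (fun u => ¬ G.Adj u v) := by
        intro x hx
        rcases Finset.mem_filter.mp hx with ⟨hxP, hnadj⟩
        exact Finset.mem_filter.mpr ⟨Finset.mem_biUnion.mpr ⟨i, Finset.mem_univ _, hxP⟩,
          fun h => hnadj h.symm⟩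
      have hle := Finset.card_le_card hsub2
      omega
    have hTpos : (0:ℝ) < (T:ℝ) - (t:ℝ) := by
      have : (t:ℝ) < (T:ℝ) := by exact_mod_cast hTt
      linarith
    have hbadtot : (bad.card : ℝ) * ((T:ℝ) - t) ≤ ((q:ℝ)+1) * T * ((1/((q:ℝ)+1) - ε) * n) := by
      have h1 : bad.card * (T - t) ≤ ∑ v ∈ bad, (U.filter (fun u => ¬ G.Adj u v)).card := by
        calc bad.card * (T-t) = ∑ _v ∈ bad, (T-t) := by rw [Finset.sum_const, smul_eq_mul]
          _ ≤ _ := Finset.sum_le_sum hbadcount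
      have h2 : ∑ v ∈ bad, (U.filter (fun u => ¬ G.Adj u v)).card
          ≤ ∑ v ∈ s, (U.filter (fun u => ¬ G.Adj u v)).card :=
        Finset.sum_le_sum_of_subset (Finset.filter_subset _ _)
      have h3 : (∑ u ∈ U, ((s.filter (fun v => ¬ G.Adj u v)).card : ℝ))
          ≤ (U.card : ℝ) * ((1/((q:ℝ)+1) - ε) * n) := by
        calc (∑ u ∈ U, ((s.filter (fun v => ¬ G.Adj u v)).card : ℝ))
            ≤ ∑ _u ∈ U, (1/((q:ℝ)+1) - ε) * (n:ℝ) := Finset.sum_le_sum hperu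
          _ = (U.card : ℝ) * ((1/((q:ℝ)+1) - ε) * n) := by rw [Finset.sum_const, nsmul_eq_mul]
      have hnat : bad.card * (T - t) ≤ ∑ u ∈ U, (s.filter (fun v => ¬ G.Adj u v)).card :=
        le_trans (le_trans h1 h2) (le_of_eq hswap)
      have hcast : ((bad.card * (T - t) : ℕ) : ℝ)
          ≤ ((∑ u ∈ U, (s.filter (fun v => ¬ G.Adj u v)).card : ℕ) : ℝ) := Nat.cast_le.mpr hnat
      rw [Nat.cast_mul, Nat.cast_sub hTt.le, Nat.cast_sum] at hcast
      calc (bad.card:ℝ) * ((T:ℝ)-(t:ℝ)) ≤ _ := hcast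
        _ ≤ (U.card : ℝ) * ((1/((q:ℝ)+1) - ε) * n) := h3
        _ = ((q:ℝ)+1) * T * ((1/((q:ℝ)+1) - ε) * n) := by rw [hUcard]; push_cast; ring
    have hAT : ((q:ℝ)+1) * T * ((1/((q:ℝ)+1) - ε) * n) ≤ ((1-σ) * (n:ℝ)) * ((T:ℝ)-t) := by
      have hq0 : (0:ℝ) < (q:ℝ)+1 := by positivity
      have expand : ((q:ℝ)+1) * (1/((q:ℝ)+1) - ε) = 1 - ((q:ℝ)+1)*ε := by
        field_simp
      have h1 : (1 - ((q:ℝ)+1)*ε) * (T:ℝ) ≤ (1-σ)*((T:ℝ)-t) := by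
        have ht0 : (0:ℝ) ≤ (t:ℝ) := Nat.cast_nonneg t
        have hT0 : (0:ℝ) ≤ (T:ℝ) := Nat.cast_nonneg T
        have e1 : (1 - ((q:ℝ)+1)*ε) * (T:ℝ) ≤ (1-2*σ)*(T:ℝ) := by
          apply mul_le_mul_of_nonneg_right _ hT0
          linarith
        have e3 : (0:ℝ) ≤ σ * t := mul_nonneg hσpos.le ht0
        nlinarith [hTσ, e3]
      have hn0 : (0:ℝ) ≤ (n:ℝ) := Nat.cast_nonneg n
      calc ((q:ℝ)+1) * T * ((1/((q:ℝ)+1) - ε) * n)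
          = ((1 - ((q:ℝ)+1)*ε) * (T:ℝ)) * n := by rw [← expand]; ring
        _ ≤ ((1-σ)*((T:ℝ)-t)) * n := mul_le_mul_of_nonneg_right h1 hn0
        _ = ((1-σ) * (n:ℝ)) * ((T:ℝ)-t) := by ring
    have hbadle : (bad.card : ℝ) ≤ (1-σ) * n :=
      le_of_mul_le_mul_right (le_trans hbadtot hAT) hTpos
    have hgoodge : σ * (n:ℝ) ≤ (good.card : ℝ) := by
      have hsum : good.card + bad.card = n :=
        Finset.card_filter_add_card_filter_not _
      have hsum' : (good.card : ℝ) + (bad.card : ℝ) = (n:ℝ) := by exact_mod_cast hsum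
      linarith
    -- choose t-subsets of neighborhoods for good vertices
    have hch0 : ∀ v : V, ∀ i : Fin (q+1), ∃ c : Finset V, c ⊆ nbP i v ∧ (v ∈ good → c.card = t) := by
      intro v i
      by_cases hv : v ∈ good
      · have ht : t ≤ (nbP i v).card := (Finset.mem_filter.mp hv).2 i
        obtain ⟨c, hc1, hc2⟩ := Finset.exists_subset_card_eq (n := t) ht
        exact ⟨c, hc1, fun _ => hc2⟩
      · exact ⟨∅, Finset.empty_subset _, fun h => absurd h hv⟩
    choose ch hch1 hch2 using hch0
    have hnbPP : ∀ v i, nbP i v ⊆ P i := fun v i => Finset.filter_subset _ _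
    set Cv : V → Finset V := fun v => Finset.univ.biUnion (ch v) with hCv
    have hCvU : ∀ v : V, Cv v ∈ U.powerset := by
      intro v
      rw [Finset.mem_powerset]
      intro x hx
      rcases Finset.mem_biUnion.mp hx with ⟨i, _, hxi⟩
      exact Finset.mem_biUnion.mpr ⟨i, Finset.mem_univ _, hnbPP v i (hch1 v i hxi)⟩
    have hKgood : U.powerset.card * (t-1) < good.card := by
      have h1 : U.powerset.card = 2^((q+1)*T) := by rw [Finset.card_powerset, hUcard]
      have h2 : (K:ℝ) ≤ σ * ((max N₁ ⌈(K:ℝ)/σ⌉₊ : ℕ) : ℝ) := by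
        have hc1 : ((⌈(K:ℝ)/σ⌉₊ : ℕ):ℝ) ≤ ((max N₁ ⌈(K:ℝ)/σ⌉₊ : ℕ) : ℝ) :=
          Nat.cast_le.mpr (le_max_right _ _)
        have hc2 : (K:ℝ)/σ ≤ ((⌈(K:ℝ)/σ⌉₊ : ℕ):ℝ) := Nat.le_ceil _
        have hc3 : (K:ℝ)/σ ≤ ((max N₁ ⌈(K:ℝ)/σ⌉₊ : ℕ) : ℝ) := le_trans hc2 hc1
        calc (K:ℝ) = ((K:ℝ)/σ) * σ := by field_simp
          _ ≤ _ * σ := mul_le_mul_of_nonneg_right hc3 hσpos.le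
          _ = σ * _ := mul_comm _ _
      have h3 : ((max N₁ ⌈(K:ℝ)/σ⌉₊ : ℕ) : ℝ) ≤ (n:ℝ) := Nat.cast_le.mpr hsN
      have h4 : (K:ℝ) ≤ (good.card : ℝ) :=
        le_trans (le_trans h2 (mul_le_mul_of_nonneg_left h3 hσpos.le)) hgoodge
      have h5 : K ≤ good.card := by exact_mod_cast h4
      rw [h1, mul_comm]
      rw [hKdef] at h5
      omega
    obtain ⟨A, hA, hfib⟩ := Finset.exists_lt_card_fiber_of_mul_lt_card_of_maps_to
      (fun v _ => hCvU v) hKgood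
    have hfibpos : 0 < (good.filter (fun v => Cv v = A)).card := by omega
    obtain ⟨v₀, hv₀⟩ := Finset.card_pos.mp hfibpos
    obtain ⟨hv₀good, hv₀A⟩ := Finset.mem_filter.mp hv₀
    obtain ⟨W, hWsub, hWcard⟩ :=
      Finset.exists_subset_card_eq (s := good.filter (fun v => Cv v = A)) (n := t) (by omega)
    have hQeq : ∀ i, A ∩ P i = ch v₀ i := by
      intro i
      apply Finset.Subset.antisymm
      · intro x hx
        rcases Finset.mem_inter.mp hx with ⟨hxA, hxP⟩
        rw [← hv₀A] at hxA
        rcases Finset.mem_biUnion.mp hxA with ⟨j, _, hxj⟩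
        by_cases hji : j = i
        · subst hji; exact hxj
        · exact absurd hxP
            (Finset.disjoint_left.mp (hPdisj j i hji) (hnbPP v₀ j (hch1 v₀ j hxj)))
      · intro x hx
        refine Finset.mem_inter.mpr ⟨?_, hnbPP v₀ i (hch1 v₀ i hx)⟩
        rw [← hv₀A]
        exact Finset.mem_biUnion.mpr ⟨i, Finset.mem_univ _, hx⟩
    have hQcard : ∀ i, (A ∩ P i).card = t := fun i => by
      rw [hQeq i]; exact hch2 v₀ i hv₀good
    have hQP : ∀ i, A ∩ P i ⊆ P i := fun i => Finset.inter_subset_right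
    have hWadj : ∀ v ∈ W, ∀ x ∈ A, G.Adj v x := by
      intro v hv x hx
      obtain ⟨hvgood, hvA⟩ := Finset.mem_filter.mp (hWsub hv)
      rw [← hvA] at hx
      rcases Finset.mem_biUnion.mp hx with ⟨i, _, hxi⟩
      exact (Finset.mem_filter.mp (hch1 v i hxi)).2
    have hWs : W ⊆ s := by
      intro v hv
      exact Finset.filter_subset _ _ (Finset.filter_subset _ _ (hWsub hv))
    refine ⟨fun i => if h : i = 0 then W else A ∩ P (i.pred h), fun i => ?_, ?_⟩
    · by_cases h : i = 0
      · simp only [dif_pos h]; exact ⟨hWs, hWcard⟩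
      · simp only [dif_neg h]
        exact ⟨(hQP _).trans ((hP1 _).1), hQcard _⟩
    · intro i j hij u hu x hx
      by_cases hi : i = 0 <;> by_cases hj : j = 0
      · exact absurd (hi.trans hj.symm) hij
      · simp only [dif_pos hi] at hu
        simp only [dif_neg hj] at hx
        exact hWadj u hu x (Finset.mem_inter.mp hx).1
      · simp only [dif_neg hi] at hu
        simp only [dif_pos hj] at hx
        exact (hWadj x hx u (Finset.mem_inter.mp hu).1).symm
      · simp only [dif_neg hi] at hu
        simp only [dif_neg hj] at hx
        refine hP2 _ _ ?_ u (hQP _ hu) x (hQP _ hx)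
        intro hcon
        exact hij (by rwa [Fin.pred_inj] at hcon)
end ES
section Density
variable {V : Type*}

/-- the defining set for `upperDensity`. -/
def densSet (G : SimpleGraph V) : Set ℝ :=
  {α : ℝ | ∀ N : ℕ, ∃ s : Finset V, N ≤ s.card ∧ α ≤ finDensity G s}

lemma upperDensity_eq (G : SimpleGraph V) : upperDensity G = sSup (densSet G) := rfl

open scoped Classical in
lemma finDensity_eq (G : SimpleGraph V) (s : Finset V) :
    finDensity G s = (epairs G s : ℝ) / ((s.card : ℝ) * ((s.card : ℝ) - 1)) := rfl

lemma nat_cast_mul_sub_nonneg (m : ℕ) : (0:ℝ) ≤ (m:ℝ) * ((m:ℝ) - 1) := by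
  rcases Nat.eq_zero_or_pos m with h | h
  · simp [h]
  · have h1 : (1:ℝ) ≤ (m:ℝ) := by exact_mod_cast h
    nlinarith

lemma densSet_bddAbove (G : SimpleGraph V) : BddAbove (densSet G) := by
  refine ⟨1, fun α hα => ?_⟩
  obtain ⟨s, hs2, hsd⟩ := hα 2
  have h2 : (2:ℝ) ≤ (s.card : ℝ) := by exact_mod_cast hs2
  have hD : (0:ℝ) < (s.card : ℝ) * ((s.card : ℝ) - 1) := by nlinarith
  have hub : finDensity G s ≤ 1 := by
    rw [finDensity_eq, div_le_one hD]
    exact epairs_le G s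
  linarith

lemma zero_mem_densSet (G : SimpleGraph V) [Infinite V] : (0:ℝ) ∈ densSet G := by
  intro N
  obtain ⟨s, hs⟩ := Infinite.exists_subset_card_eq V (max N 2)
  refine ⟨s, le_trans (le_max_left _ _) hs.ge, ?_⟩
  rw [finDensity_eq]
  apply div_nonneg (Nat.cast_nonneg _) (nat_cast_mul_sub_nonneg _)

lemma upperDensity_nonneg (G : SimpleGraph V) [Infinite V] : 0 ≤ upperDensity G := by
  rw [upperDensity_eq]
  exact le_csSup (densSet_bddAbove G) (zero_mem_densSet G)

lemma upperDensity_approx (G : SimpleGraph V) [Infinite V] (ε : ℝ) (hε : 0 < ε) (N : ℕ) :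
    ∃ s : Finset V, N ≤ s.card ∧ upperDensity G - ε ≤ finDensity G s := by
  have hne : (densSet G).Nonempty := ⟨0, zero_mem_densSet G⟩
  have hlt : upperDensity G - ε < sSup (densSet G) := by
    rw [← upperDensity_eq]; linarith
  obtain ⟨α, hα, hgt⟩ := exists_lt_of_lt_csSup hne hlt
  obtain ⟨s, h1, h2⟩ := hα N
  exact ⟨s, h1, le_trans hgt.le h2⟩

open scoped Classical in
lemma exists_cliqueFree (G : SimpleGraph V) [Infinite V] (h : upperDensity G < 1) :
    ∃ w : ℕ, 2 ≤ w ∧ G.CliqueFree w := by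
  by_contra hcon
  push_neg at hcon
  have h1 : (1:ℝ) ∈ densSet G := by
    intro N
    have hnc := hcon (max N 2) (le_max_right _ _)
    rw [SimpleGraph.CliqueFree] at hnc
    push_neg at hnc
    obtain ⟨S, hS⟩ := hnc
    have hScard : S.card = max N 2 := hS.2
    have h2S : 2 ≤ S.card := hScard ▸ le_max_right _ _
    refine ⟨S, hScard ▸ le_max_left _ _, ?_⟩
    have hfilter : ((S ×ˢ S).filter (fun p : V × V => G.Adj p.1 p.2)) = S.offDiag := by
      ext ⟨a, b⟩
      simp only [Finset.mem_filter, Finset.mem_product, Finset.mem_offDiag]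
      constructor
      · rintro ⟨⟨ha, hb⟩, hadj⟩
        exact ⟨ha, hb, hadj.ne⟩
      · rintro ⟨ha, hb, hne⟩
        exact ⟨⟨ha, hb⟩, hS.1 ha hb hne⟩
    have hcard : ((S ×ˢ S).filter (fun p : V × V => G.Adj p.1 p.2)).card
        = S.card * S.card - S.card := by rw [hfilter, Finset.offDiag_card]
    rw [finDensity, hcard]
    have hm : S.card ≤ S.card * S.card := Nat.le_mul_of_pos_left _ (by omega)
    have hcast : ((S.card * S.card - S.card : ℕ) : ℝ)
        = (S.card : ℝ) * ((S.card : ℝ) - 1) := by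
      rw [Nat.cast_sub hm]
      push_cast
      ring
    rw [hcast]
    have hc2 : (2:ℝ) ≤ (S.card : ℝ) := by exact_mod_cast h2S
    have hDpos : (0:ℝ) < (S.card : ℝ) * ((S.card : ℝ) - 1) := by nlinarith
    rw [div_self hDpos.ne']
  have := le_csSup (densSet_bddAbove G) h1
  rw [← upperDensity_eq] at this
  linarith

end Density
set_option maxHeartbeats 1000000 in
/-- For an infinite graph `G` with upper density `δ(G) < 1`,
`NCL G ≥ 2 / (1 - δ(G))`. -/
theorem stmt_8 {V : Type*} [Infinite V] (G : SimpleGraph V)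
    (h : upperDensity G < 1) :
    ((⌈(2 : ℝ) / (1 - upperDensity G)⌉₊ : ℕ) : ℕ∞) ≤ NCL G := by
  classical
  set δ := upperDensity G with hδdef
  have hδ0 : 0 ≤ δ := upperDensity_nonneg G
  have hδ1 : (0:ℝ) < 1 - δ := by linarith
  obtain ⟨w, hw2, hwcf⟩ := exists_cliqueFree G h
  set r := ⌈1/(1-δ)⌉₊ with hrdef
  have hr1 : 1 ≤ r := by
    rw [hrdef]
    exact Nat.ceil_pos.mpr (by positivity)
  have hrge : 1/(1-δ) ≤ (r:ℝ) := Nat.le_ceil _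
  have hflt : (r:ℝ) < 1/(1-δ) + 1 := by
    rw [hrdef]; exact Nat.ceil_lt_add_one (by positivity)
  clear_value δ r
  have hMP : ∃ s : Finset V, MP G s r w := by
    rcases eq_or_lt_of_le hr1 with hr1' | hr2
    · obtain ⟨s, hs⟩ := Infinite.exists_subset_card_eq V w
      refine ⟨s, ?_⟩
      rw [← hr1']
      exact ⟨fun _ => s, fun i => ⟨Finset.Subset.rfl, hs⟩,
        fun i j hij => absurd (Fin.ext (by omega)) hij⟩
    · have hq1 : 1 ≤ r - 1 := by omega
      have hcast : ((r - 1 : ℕ) : ℝ) = (r:ℝ) - 1 := by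
        rw [Nat.cast_sub hr1]; norm_num
      have hr3 : (0:ℝ) < (r:ℝ) - 1 := by
        have : (2:ℝ) ≤ (r:ℝ) := by exact_mod_cast hr2
        linarith
      have hθδ : 1 - 1/((r:ℝ)-1) < δ := by
        have h2 : (r:ℝ) - 1 < 1/(1-δ) := by linarith [hflt]
        have h4 : 1 - δ < 1/((r:ℝ)-1) := by
          rw [lt_div_iff₀ hr3]
          calc (1-δ)*((r:ℝ)-1) < (1-δ)*(1/(1-δ)) := mul_lt_mul_of_pos_left h2 hδ1
            _ = 1 := by field_simp
        linarith
      set θ : ℝ := 1 - 1/((r:ℝ)-1) with hθdef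
      have hθ0 : 0 ≤ θ := by
        have h5 : 1/((r:ℝ)-1) ≤ 1 := by
          rw [div_le_one hr3]
          have : (2:ℝ) ≤ (r:ℝ) := by exact_mod_cast hr2
          linarith
        rw [hθdef]; linarith
      set ε : ℝ := (δ - θ)/4 with hεdef
      have hεpos : 0 < ε := by
        rw [hεdef]
        exact div_pos (sub_pos.mpr hθδ) (by norm_num)
      obtain ⟨NES, hNES⟩ := exists_MP_of_minDeg G (r-1) w ε hεpos
      have hmax : ((max (r-1) 1 : ℕ):ℝ) = (r:ℝ) - 1 := by
        have he : max (r-1) 1 = r - 1 := by omega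
        rw [he, hcast]
      set c : ℝ := θ + 2*ε with hcdef
      have hc1 : c < 1 := by rw [hcdef, hεdef]; linarith
      have hc0 : 0 ≤ c := by rw [hcdef]; linarith
      have heq : c + ε = δ - ε := by rw [hcdef, hεdef]; ring
      have hcth : c = (1 - 1/((r:ℝ)-1)) + 2*ε := by rw [hcdef, hθdef]
      clear_value θ
      clear_value ε c
      set K₀ : ℕ := max NES ⌈1/ε⌉₊ + 2 with hK₀def
      have hK₀a : NES ≤ K₀ := by
        have := le_max_left NES ⌈1/ε⌉₊
        omega
      have hK₀b : ⌈1/ε⌉₊ ≤ K₀ := by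
        have := le_max_right NES ⌈1/ε⌉₊
        omega
      clear_value K₀
      set N₀ : ℕ := ⌈(K₀:ℝ)^2/ε⌉₊ + K₀ + 2 with hN₀def
      have hN₀a : ⌈(K₀:ℝ)^2/ε⌉₊ + 1 ≤ N₀ := by omega
      have hN₀b : 2 ≤ N₀ := by omega
      clear_value N₀
      obtain ⟨s, hscard, hsdens⟩ := upperDensity_approx G ε hεpos N₀
      rw [← hδdef] at hsdens
      have hn2 : 2 ≤ s.card := le_trans hN₀b hscard
      have hnr : (2:ℝ) ≤ (s.card:ℝ) := by exact_mod_cast hn2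
      have hD : (0:ℝ) < (s.card:ℝ) * ((s.card:ℝ)-1) := by nlinarith
      have hepairs : c * ((s.card:ℝ)*((s.card:ℝ)-1)) + ε * ((s.card:ℝ)*((s.card:ℝ)-1))
          ≤ (epairs G s : ℝ) := by
        have h1 : δ - ε ≤ finDensity G s := hsdens
        rw [finDensity_eq, le_div_iff₀ hD] at h1
        nlinarith [h1, heq]
      obtain ⟨s', hsub, hmin, hB⟩ := exists_minDeg G c (ε * ((s.card:ℝ)*((s.card:ℝ)-1))) s hepairs
      have hkk0 : (0:ℝ) ≤ (s'.card:ℝ)*((s'.card:ℝ)-1) := nat_cast_mul_sub_nonneg _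
      have hk2 : (K₀:ℝ)^2 ≤ (s'.card:ℝ)*((s'.card:ℝ)-1) := by
        have h6 : ε * ((s.card:ℝ)*((s.card:ℝ)-1)) ≤ (s'.card:ℝ)*((s'.card:ℝ)-1) := by
          linarith [hB, mul_nonneg hc0 hkk0]
        have h7 : (K₀:ℝ)^2 ≤ ε * ((s.card:ℝ)*((s.card:ℝ)-1)) := by
          have h8 : ((⌈(K₀:ℝ)^2/ε⌉₊ : ℕ) : ℝ) ≤ (s.card:ℝ) - 1 := by
            have : (⌈(K₀:ℝ)^2/ε⌉₊ : ℕ) + 1 ≤ s.card := le_trans hN₀a hscard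
            have hc' : ((⌈(K₀:ℝ)^2/ε⌉₊ : ℕ) : ℝ) + 1 ≤ (s.card:ℝ) := by exact_mod_cast this
            linarith
          have h9 : (K₀:ℝ)^2/ε ≤ (s.card:ℝ) - 1 := le_trans (Nat.le_ceil _) h8
          have h10 : (K₀:ℝ)^2 ≤ ε * ((s.card:ℝ)-1) := by
            rw [div_le_iff₀ hεpos] at h9; linarith [mul_comm ε ((s.card:ℝ)-1)] 
          have h11 : ε * ((s.card:ℝ)-1) ≤ ε * ((s.card:ℝ)*((s.card:ℝ)-1)) := by
            apply mul_le_mul_of_nonneg_left _ hεpos.le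
            nlinarith
          linarith
        linarith
      have hkK₀ : K₀ ≤ s'.card := by
        by_contra hcon
        push_neg at hcon
        have : (s'.card:ℝ) < (K₀:ℝ) := by exact_mod_cast hcon
        have hk0 : (0:ℝ) ≤ (s'.card:ℝ) := Nat.cast_nonneg _
        nlinarith
      have hdeg' : ∀ v ∈ s', (1 - 1/((max (r-1) 1 : ℕ):ℝ) + ε) * (s'.card:ℝ)
          ≤ ((nbhdIn G s' v).card : ℝ) := by
        intro v hv
        have hm := hmin v hv
        rw [hmax]
        have hke : (1:ℝ) ≤ ε * (s'.card:ℝ) := by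
          have h12 : ((⌈1/ε⌉₊:ℕ):ℝ) ≤ (s'.card:ℝ) := by
            have h12' : (⌈1/ε⌉₊:ℕ) ≤ s'.card := le_trans hK₀b hkK₀
            exact_mod_cast h12'
          have h13 : 1/ε ≤ (s'.card:ℝ) := le_trans (Nat.le_ceil _) h12
          rw [div_le_iff₀ hεpos] at h13
          nlinarith
        have hstep : (1 - 1/((r:ℝ)-1) + ε) * (s'.card:ℝ) ≤ c * ((s'.card:ℝ) - 1) := by
          have he1 : (1 - 1/((r:ℝ)-1) + ε) * (s'.card:ℝ)
              = c * (s'.card:ℝ) - ε * (s'.card:ℝ) := by rw [hcth]; ring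
          have he2 : c * ((s'.card:ℝ)-1) = c * (s'.card:ℝ) - c := by ring
          rw [he1, he2]
          linarith [hke, hc1]
        linarith
      have hresult := hNES s' (le_trans hK₀a hkK₀) hdeg'
      have : r - 1 + 1 = r := by omega
      rw [this] at hresult
      exact ⟨s', hresult⟩
  obtain ⟨s, P, hP1, hP2⟩ := hMP
  have hpairs : ∀ i : Fin r, ∃ x, x ∈ P i ∧ ∃ y, y ∈ P i ∧ x ≠ y ∧ ¬ G.Adj x y := by
    intro i
    by_contra hcon
    push_neg at hcon
    refine hwcf (P i) ⟨?_, (hP1 i).2⟩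
    intro x hx y hy hxy
    exact hcon x (by exact_mod_cast hx) y (by exact_mod_cast hy) hxy
  choose uu huu vv hvv hne hnadj using hpairs
  have hrpos : 0 < r := hr1
  set b : ℕ → V := fun m => if hm : m / 2 < r then
      (if m % 2 = 0 then uu ⟨m/2, hm⟩ else vv ⟨m/2, hm⟩) else uu ⟨0, hrpos⟩ with hbdef
  have hNCS : IsNCS G (2*r) b := by
    intro k hk
    rcases Nat.even_or_odd k with hke | hko
    · obtain ⟨j, hj⟩ := hke
      have hjr : j < r := by omega
      refine ⟨uu ⟨j, hjr⟩, ?_, ?_⟩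
      · intro i hi
        have hir : i / 2 < r := by omega
        simp only [hbdef, dif_pos hir]
        by_cases hieq : i = k
        · subst hieq
          have h1 : i % 2 = 0 := by omega
          have h2 : i / 2 = j := by omega
          rw [if_pos h1]
          subst h2
          exact Or.inl rfl
        · have hlt : i / 2 < j := by omega
          have hne2 : (⟨j, hjr⟩ : Fin r) ≠ ⟨i/2, hir⟩ := by
            intro hcon
            simp only [Fin.mk.injEq] at hcon
            omega
          by_cases h1 : i % 2 = 0
          · rw [if_pos h1]
            exact Or.inr (hP2 _ _ hne2 _ (huu _) _ (huu _))
          · rw [if_neg h1]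
            exact Or.inr (hP2 _ _ hne2 _ (huu _) _ (hvv _))
      · have hir : (k+1) / 2 < r := by omega
        simp only [hbdef, dif_pos hir]
        have h1 : ¬((k+1) % 2 = 0) := by omega
        rw [if_neg h1]
        have h2 : (k+1)/2 = j := by omega
        subst h2
        rintro (heq | hadj)
        · exact hne _ heq
        · exact hnadj _ hadj
    · obtain ⟨j, hj⟩ := hko
      have hjr : j + 1 < r := by omega
      refine ⟨vv ⟨j+1, hjr⟩, ?_, ?_⟩
      · intro i hi
        have hir : i / 2 < r := by omega
        have hlt : i / 2 < j + 1 := by omega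
        have hne2 : (⟨j+1, hjr⟩ : Fin r) ≠ (⟨i/2, hir⟩ : Fin r) := by
          intro hcon
          simp only [Fin.mk.injEq] at hcon
          omega
        simp only [hbdef, dif_pos hir]
        by_cases h1 : i % 2 = 0
        · rw [if_pos h1]
          exact Or.inr (hP2 _ _ hne2 _ (hvv _) _ (huu _))
        · rw [if_neg h1]
          exact Or.inr (hP2 _ _ hne2 _ (hvv _) _ (hvv _))
      · have hir : (k+1) / 2 < r := by omega
        simp only [hbdef, dif_pos hir]
        have h1 : (k+1) % 2 = 0 := by omega
        rw [if_pos h1]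
        have h2 : (k+1)/2 = j+1 := by omega
        have h2' : (⟨(k+1)/2, hir⟩ : Fin r) = ⟨j+1, hjr⟩ := by
          simp only [Fin.mk.injEq]; omega
        rw [h2']
        rintro (heq | hadj)
        · exact hne _ heq.symm
        · exact hnadj _ hadj.symm
  have hmem : ((2*r : ℕ) : ℕ∞) ∈ {x : ℕ∞ | ∃ n : ℕ, x = n ∧ ∃ b : ℕ → V, IsNCS G n b} :=
    ⟨2*r, rfl, b, hNCS⟩
  have hle : ((2*r : ℕ) : ℕ∞) ≤ NCL G := le_sSup hmem
  refine le_trans ?_ hle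
  have hmr : ⌈(2:ℝ)/(1-δ)⌉₊ ≤ 2*r := by
    rw [Nat.ceil_le]
    have heq : (2:ℝ)/(1-δ) = 2*(1/(1-δ)) := by ring
    rw [heq]
    push_cast
    nlinarith [hrge]
  exact_mod_cast hmr
end

section
/- If a graph G has finite clique number w and contains the complete multipartite graph K_r(w+1) as a subgraph, then G contains K_r(2) as an induced subgraph. -/
/-- If `G` has no clique of size `w+1` and contains the complete multipartite
graph `K_r(w+1)` as a (not necessarily induced) subgraph, then `G` contains
`K_r(2)` as an induced subgraph. -/
theorem stmt_9 {V : Type*} (G : SimpleGraph V) (w r : ℕ)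
    (hclique : G.CliqueFree (w + 1))
    (f : Fin r × Fin (w + 1) → V) (hf : Function.Injective f)
    (hadj : ∀ u v : Fin r × Fin (w + 1), u.1 ≠ v.1 → G.Adj (f u) (f v)) :
    ∃ g : Fin r × Fin 2 → V, Function.Injective g ∧
      ∀ u v : Fin r × Fin 2, G.Adj (g u) (g v) ↔ u.1 ≠ v.1 := by
  classical
  have key : ∀ i : Fin r, ∃ a b : Fin (w + 1), a ≠ b ∧ ¬ G.Adj (f (i, a)) (f (i, b)) := by
    intro i
    by_contra h
    push_neg at h
    have hinj : Function.Injective (fun a : Fin (w + 1) => f (i, a)) := by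
      intro x y hxy
      have := hf hxy
      exact (Prod.mk.injEq _ _ _ _ ▸ this).2
    apply hclique (Finset.univ.image (fun a : Fin (w + 1) => f (i, a)))
    constructor
    · intro x hx y hy hxy
      simp only [Finset.coe_image, Set.mem_image, Finset.mem_coe, Finset.mem_univ] at hx hy
      obtain ⟨x', -, rfl⟩ := hx
      obtain ⟨y', -, rfl⟩ := hy
      exact h x' y' (fun e => hxy (by rw [e]))
    · rw [Finset.card_image_of_injective _ hinj, Finset.card_univ, Fintype.card_fin]
  choose a b hne hnadj using key
  refine ⟨fun u => f (u.1, if u.2 = 0 then a u.1 else b u.1), ?_, ?_⟩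
  · rintro ⟨i, x⟩ ⟨j, y⟩ huv
    simp only at huv
    have h1 := hf huv
    have h2 : i = j := congrArg Prod.fst h1
    subst h2
    have h3 : (if x = 0 then a i else b i) = (if y = 0 then a i else b i) :=
      congrArg Prod.snd h1
    have h4 : x = y := by
      fin_cases x <;> fin_cases y <;> simp_all
      exact hne i h1.symm
    rw [h4]
  · rintro ⟨i, x⟩ ⟨j, y⟩
    simp only [ne_eq]
    constructor
    · intro hGadj hne1
      subst hne1
      by_cases h2 : x = y
      · subst h2; exact G.irrefl hGadj
      · fin_cases x <;> fin_cases y <;> simp_all <;>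
          first
          | exact hnadj i hGadj
          | exact hnadj i hGadj.symm
    · intro hne1
      exact hadj (i, _) (j, _) hne1
end

section
/- For every integer n ≥ 1 there exists a bipartite triangle-free graph G with chromatic number at most 2 and NCL(G) ≥ n, namely the bipartite half-graph H_n. -/
/-- The bipartite half-graph `H_n`: `a i` adjacent to `b j` iff `j ≤ i`. -/
def halfGraph (n : ℕ) : SimpleGraph (Fin n ⊕ Fin n) :=
  SimpleGraph.fromRel (fun u v => ∃ i j, u = Sum.inl i ∧ v = Sum.inr j ∧ j ≤ i)

lemma halfGraph_adj (n : ℕ) (u v : Fin n ⊕ Fin n) :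
    (halfGraph n).Adj u v ↔
      (∃ i j : Fin n, u = Sum.inl i ∧ v = Sum.inr j ∧ j ≤ i) ∨
      (∃ i j : Fin n, v = Sum.inl i ∧ u = Sum.inr j ∧ j ≤ i) := by
  constructor
  · rintro ⟨hne, h | h⟩
    · exact Or.inl h
    · exact Or.inr h
  · rintro (⟨i, j, rfl, rfl, hij⟩ | ⟨i, j, rfl, rfl, hij⟩)
    · exact ⟨by simp, Or.inl ⟨i, j, rfl, rfl, hij⟩⟩
    · exact ⟨by simp, Or.inr ⟨i, j, rfl, rfl, hij⟩⟩

lemma halfGraph_color (n : ℕ) : (halfGraph n).Colorable 2 := by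
  refine ⟨SimpleGraph.Coloring.mk (fun v => match v with
    | Sum.inl _ => 0
    | Sum.inr _ => 1) ?_⟩
  intro u v h
  rw [halfGraph_adj] at h
  rcases h with ⟨i, j, rfl, rfl, _⟩ | ⟨i, j, rfl, rfl, _⟩ <;> simp

/-- For every `n ≥ 1` there is a `2`-colorable, triangle-free graph with
nested complexity length at least `n`, namely the bipartite half-graph `H_n`. -/
theorem stmt_15 (n : ℕ) (hn : 1 ≤ n) :
    (halfGraph n).Colorable 2 ∧ (halfGraph n).CliqueFree 3 ∧
      (n : ℕ∞) ≤ NCL (halfGraph n) := by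
  refine ⟨halfGraph_color n, (halfGraph_color n).cliqueFree (by norm_num), ?_⟩
  apply le_sSup
  refine ⟨n, rfl, fun k => Sum.inr ⟨min k (n-1), by omega⟩, ?_⟩
  intro k hk
  refine ⟨Sum.inl ⟨k, by omega⟩, ?_, ?_⟩
  · intro i hi
    right
    rw [halfGraph_adj]
    left
    exact ⟨_, _, rfl, rfl, by simp [Fin.le_def]; omega⟩
  · rintro (h | h)
    · exact absurd h (by simp)
    · rw [halfGraph_adj] at h
      rcases h with ⟨i, j, h1, h2, hij⟩ | ⟨i, j, h1, h2, hij⟩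
      · simp only [Sum.inl.injEq, Sum.inr.injEq] at h1 h2
        subst h1; subst h2
        simp [Fin.le_def] at hij
        omega
      · simp at h1
end
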